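/- Let K be an algebraically closed field with a nonarchimedean valuation ν, valuation ring R, maximal ideal 𝔪, and residue field k. Let g ∈ R[y] be a polynomial whose reduction ḡ ∈ k[y] modulo 𝔪 is nonzero, and let a ∈ k* be a root of ḡ. Then there exists x ∈ R* with residue a such that g(x) = 0. -/

import Mathlib

open Polynomial IsLocalRing

/-- Over an algebraically closed valued field, any nonzero root of the reduction of a
polynomial with coefficients in the valuation ring lifts to a root in the units of the
valuation ring with the prescribed residue. -/
theorem lift_root_of_reduction {K : Type*} [Field K] [IsAlgClosed K]
    (A : ValuationSubring K) (g : Polynomial A)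
    (hg : Polynomial.map (IsLocalRing.residue A) g ≠ 0)
    (a : IsLocalRing.ResidueField A) (ha : a ≠ 0)
    (hroot : (Polynomial.map (IsLocalRing.residue A) g).eval a = 0) :
    ∃ x : Aˣ, IsLocalRing.residue A (x : A) = a ∧ Polynomial.eval ((x : A)) g = 0 := by
  classical
  set ι : A →+* K := A.subtype with hι
  have hιinj : Function.Injective ι := Subtype.coe_injective
  have hg0 : g ≠ 0 := by rintro rfl; simp at hg
  set gK : K[X] := g.map ι with hgK
  have hgK0 : gK ≠ 0 := (Polynomial.map_ne_zero_iff hιinj).mpr hg0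
  have hsplit : gK.Splits := IsAlgClosed.splits gK
  set M := gK.roots with hM
  set S := M.filter (· ∈ A) with hS
  set T := M.filter (fun r => ¬ r ∈ A) with hT
  have hMS : S + T = M := Multiset.filter_add_not _ _
  have hTinv : ∀ r ∈ T, r⁻¹ ∈ A := by
    intro r hr
    rcases A.mem_or_inv_mem r with h | h
    · exact absurd h (Multiset.mem_filter.mp hr).2
    · exact h
  have hTne : ∀ r ∈ T, r ≠ 0 := by
    rintro r hr rfl
    exact (Multiset.mem_filter.mp hr).2 (zero_mem A)
  set S' : Multiset A := S.pmap (fun r hr => (⟨r, hr⟩ : A))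
      (fun r hr => (Multiset.mem_filter.mp hr).2) with hS'
  set T' : Multiset A := T.pmap (fun r hr => (⟨r⁻¹, hr⟩ : A)) hTinv with hT'
  set P : Polynomial A := (S'.map (fun s => X - C s)).prod with hP
  set Q : Polynomial A := (T'.map (fun t => 1 - C t * X)).prod with hQ
  set F : Polynomial A := P * Q with hF
  -- the image of P and Q in K[X]
  have hmapP : P.map ι = (S.map (fun r => X - C r)).prod := by
    rw [hP, Polynomial.map_multiset_prod, Multiset.map_map, hS', Multiset.map_pmap]
    simp only [Function.comp, Polynomial.map_sub, Polynomial.map_X, Polynomial.map_C]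
    rw [show (fun (r : K) (hr : r ∈ A) => X - C (ι (⟨r, hr⟩ : A))) = fun r _ => X - C r from rfl,
      Multiset.pmap_eq_map]
  have hmapQ : Q.map ι = (T.map (fun r => 1 - C r⁻¹ * X)).prod := by
    rw [hQ, Polynomial.map_multiset_prod, Multiset.map_map, hT', Multiset.map_pmap]
    simp only [Function.comp, Polynomial.map_sub, Polynomial.map_one, Polynomial.map_mul,
      Polynomial.map_X, Polynomial.map_C]
    rw [show (fun (r : K) (hr : r⁻¹ ∈ A) => 1 - C (ι (⟨r⁻¹, hr⟩ : A)) * X)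
        = fun r _ => 1 - C r⁻¹ * X from rfl, Multiset.pmap_eq_map]
  -- factor gK
  set b : K := gK.leadingCoeff * (T.map (fun r => -r)).prod with hb
  have hkey : gK = C b * F.map ι := by
    have h1 : gK = C gK.leadingCoeff * (M.map fun r => X - C r).prod :=
      hsplit.eq_prod_roots
    have h2 : (T.map fun r => X - C r) = T.map fun r => C (-r) * (1 - C r⁻¹ * X) := by
      apply Multiset.map_congr rfl
      intro r hr
      have hr0 : r ≠ 0 := hTne r hr
      have h4 : C (-r) * (1 - C r⁻¹ * X) = C (-r) - C (-r * r⁻¹) * X := by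
        rw [C_mul]; ring
      rw [h4, neg_mul, mul_inv_cancel₀ hr0, map_neg, map_neg, map_one]
      ring
    have h3 : ((T.map fun r => X - C r)).prod
        = C ((T.map fun r => -r).prod) * (T.map fun r => 1 - C r⁻¹ * X).prod := by
      rw [h2, Multiset.prod_map_mul]
      congr 1
      rw [map_multiset_prod (C : K →+* K[X]), Multiset.map_map]
      rfl
    rw [hF, Polynomial.map_mul, hmapP, hmapQ, hb]
    conv_lhs => rw [h1, ← hMS, Multiset.map_add, Multiset.prod_add, h3]
    rw [C_mul]; ring
  -- the residue of Q is 1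
  have hT'res : ∀ t ∈ T', residue A t = 0 := by
    intro t ht
    rw [hT', Multiset.mem_pmap] at ht
    obtain ⟨r, hr, rfl⟩ := ht
    rw [IsLocalRing.residue_eq_zero_iff]
    rw [IsLocalRing.mem_maximalIdeal, mem_nonunits_iff]
    intro hunit
    obtain ⟨u, hu⟩ := hunit
    have h1 : (⟨r⁻¹, hTinv r hr⟩ : A) * ↑u⁻¹ = 1 := by
      rw [← hu, Units.mul_inv]
    have h2 : r⁻¹ * ((↑(u⁻¹ : Aˣ) : A) : K) = 1 := congrArg (ι) h1
    have : ((↑(u⁻¹ : Aˣ) : A) : K) = r := by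
      have hr0 := hTne r hr
      have h6 := congrArg (fun x : K => r * x) h2
      simpa [← mul_assoc, mul_inv_cancel₀ hr0] using h6
    exact (Multiset.mem_filter.mp hr).2 (this ▸ (↑(u⁻¹ : Aˣ) : A).2)
  have hQbar : Q.map (residue A) = 1 := by
    rw [hQ, Polynomial.map_multiset_prod, Multiset.map_map]
    have : (T'.map fun t => Polynomial.map (residue A) (1 - C t * X))
        = T'.map fun _ => (1 : (ResidueField A)[X]) := by
      apply Multiset.map_congr rfl
      intro t ht
      simp [hT'res t ht]
    rw [show (Multiset.map (Polynomial.map (residue A) ∘ fun t => 1 - C t * X) T')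
        = T'.map fun t => Polynomial.map (residue A) (1 - C t * X) from rfl, this]
    simp
  -- the residue of P
  have hPbar : P.map (residue A) = (S'.map fun s => X - C (residue A s)).prod := by
    rw [hP, Polynomial.map_multiset_prod, Multiset.map_map]
    congr 1
    apply Multiset.map_congr rfl
    intro s _
    simp
  have hPmonic : (P.map (residue A)).Monic := by
    rw [hPbar]
    exact monic_multiset_prod_of_monic _ _ fun s _ => monic_X_sub_C _
  set m := (P.map (residue A)).natDegree with hm
  -- F.coeff m is a unit
  have hFm : residue A (F.coeff m) = 1 := by
    rw [← Polynomial.coeff_map, hF, Polynomial.map_mul, hQbar, mul_one]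
    exact hPmonic.coeff_natDegree
  have hFunit : IsUnit (F.coeff m) := by
    by_contra h
    rw [← mem_nonunits_iff, ← IsLocalRing.mem_maximalIdeal, ← IsLocalRing.residue_eq_zero_iff] at h
    rw [hFm] at h
    exact one_ne_zero h
  obtain ⟨w, hw⟩ := hFunit
  -- b is in A
  set b' : A := g.coeff m * ↑w⁻¹ with hb'
  have hιb' : ι b' = b := by
    have h1 : ι (g.coeff m) = gK.coeff m := (Polynomial.coeff_map ι m).symm
    have h2 : gK.coeff m = b * ι (F.coeff m) := by
      rw [hkey, coeff_C_mul, Polynomial.coeff_map]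
    have h3 : ι (F.coeff m) ≠ 0 := by
      intro h
      have h0 : F.coeff m = 0 := hιinj (by simpa using h)
      rw [h0, map_zero] at hFm
      exact zero_ne_one hFm
    have : ι b' * ι (F.coeff m) = b * ι (F.coeff m) := by
      rw [← map_mul, hb', ← hw, mul_assoc, Units.inv_mul, mul_one, hw, h1, h2]
    exact mul_right_cancel₀ h3 this
  have hgF : g = C b' * F := by
    apply Polynomial.map_injective ι hιinj
    rw [Polynomial.map_mul, Polynomial.map_C, hιb', ← hkey]
  -- reduction of g
  have hgbar : g.map (residue A) = C (residue A b') * (P.map (residue A)) := by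
    rw [hgF, Polynomial.map_mul, Polynomial.map_C, hF, Polynomial.map_mul, hQbar, mul_one]
  have hb'res : residue A b' ≠ 0 := by
    intro h
    rw [h, map_zero, zero_mul] at hgbar
    exact hg hgbar
  -- find the root among S'
  have heval : (S'.map fun s => a - residue A s).prod = 0 := by
    rw [hgbar] at hroot
    rw [eval_mul, eval_C] at hroot
    have := (mul_eq_zero.mp hroot).resolve_left hb'res
    rw [hPbar, eval_multiset_prod, Multiset.map_map] at this
    convert this using 2
    · rfl
    apply Multiset.map_congr rfl
    intro s _
    simp
  obtain ⟨z, hz⟩ := Multiset.mem_map.mp (Multiset.prod_eq_zero_iff.mp heval)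
  obtain ⟨hzS, hza⟩ := hz
  have hres : residue A z = a := (sub_eq_zero.mp hza).symm
  have hzunit : IsUnit z := by
    by_contra h
    rw [← mem_nonunits_iff, ← IsLocalRing.mem_maximalIdeal, ← IsLocalRing.residue_eq_zero_iff] at h
    exact ha (hres ▸ h)
  refine ⟨hzunit.unit, ?_, ?_⟩
  · simp only [IsUnit.unit_spec]; exact hres
  · simp only [IsUnit.unit_spec]
    -- z is a root of g
    rw [hS', Multiset.mem_pmap] at hzS
    obtain ⟨r, hrS, hzr⟩ := hzS
    have hrM : r ∈ gK.roots := (Multiset.mem_filter.mp hrS).1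
    have hev : gK.eval r = 0 := Polynomial.isRoot_of_mem_roots hrM
    have h7 : ι (g.eval z) = 0 := by
      rw [← Polynomial.eval₂_at_apply ι, ← eval_map, ← hgK]
      have hzι : ι z = r := by rw [← hzr]; rfl
      rw [hzι]
      exact hev
    exact hιinj (by simpa using h7)
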